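/- Chebyshev polynomials of the first kind satisfy T_n(x) = (J_n^{(-1/2,-1/2)}(x)) / (J_n^{(-1/2,-1/2)}(1)) for all n and x, i.e., the Jacobi polynomial with α = β = -1/2 equals T_n up to the normalization constant J_n^{(-1/2,-1/2)}(1) = (1/2)_n / n!. -/

import Mathlib

/-- Pochhammer (rising factorial) symbol `(a)_n` for a real `a`. -/
noncomputable def poch (a : ℝ) (n : ℕ) : ℝ := (ascPochhammer ℝ n).eval a

/-- Gauss hypergeometric series `₂F₁(a, b; c; x)`. -/
noncomputable def F21 (a b c x : ℝ) : ℝ :=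
  ∑' n : ℕ, poch a n * poch b n / poch c n * x ^ n / (Nat.factorial n)

/-- Jacobi polynomial `J_n^{(α,β)}(x)` via its hypergeometric representation. -/
noncomputable def jacobi (α β : ℝ) (n : ℕ) (x : ℝ) : ℝ :=
  poch (α + 1) n / (Nat.factorial n) *
    F21 (-(n : ℝ)) ((n : ℝ) + 1 + α + β) (1 + α) ((1 - x) / 2)

/-- Chebyshev polynomials of the first kind via the three-term recurrence. -/
noncomputable def cheb : ℕ → ℝ → ℝ
  | 0, _ => 1
  | 1, x => x
  | (n + 2), x => 2 * x * cheb (n + 1) x - cheb n x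

open Finset

/-- Ascending product `a (a+1) ⋯ (a+t-1)`. -/
noncomputable def U (t : ℕ) (a : ℝ) : ℝ := ∏ i ∈ range t, (a + i)

/-- `∏_{i<k} (m² - i²)`. -/
noncomputable def Qp (k : ℕ) (m : ℝ) : ℝ := ∏ i ∈ range k, (m ^ 2 - (i : ℝ) ^ 2)

/-- Coefficients of Chebyshev in powers of `(1-x)/2`. -/
noncomputable def dd (m : ℝ) (k : ℕ) : ℝ := (-4) ^ k / (Nat.factorial (2 * k)) * Qp k m

lemma U_add (s t : ℕ) (a : ℝ) : U (s + t) a = U s a * U t (a + s) := by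
  rw [U, Finset.prod_range_add, U, U]
  congr 1
  refine Finset.prod_congr rfl fun i _ => ?_
  push_cast
  ring

lemma U_succ (t : ℕ) (a : ℝ) : U (t + 1) a = U t a * (a + t) := by
  rw [U, Finset.prod_range_succ, U]

lemma U_one (a : ℝ) : U 1 a = a := by simp [U]

lemma poch_prod (a : ℝ) (k : ℕ) : poch a k = ∏ i ∈ range k, (a + i) := by
  induction k with
  | zero => simp [poch]
  | succ k ih =>
    rw [poch, ascPochhammer_succ_eval, ← poch, ih, Finset.prod_range_succ]

lemma Qp_eq (k : ℕ) (m : ℝ) : Qp k m = U k (m - k + 1) * U k m := by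
  have h1 : Qp k m = (∏ i ∈ range k, (m - i)) * ∏ i ∈ range k, (m + i) := by
    rw [Qp, ← Finset.prod_mul_distrib]
    refine Finset.prod_congr rfl fun i _ => by ring
  have h2 : (∏ i ∈ range k, (m - i)) = U k (m - k + 1) := by
    rw [U, ← Finset.prod_range_reflect]
    refine Finset.prod_congr rfl fun i hi => ?_
    have hik : i < k := Finset.mem_range.1 hi
    have h1k : 1 ≤ k := by omega
    have hik' : i ≤ k - 1 := by omega
    rw [Nat.cast_sub hik', Nat.cast_sub h1k]
    push_cast
    ring
  rw [h1, h2]; rfl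

lemma Qp_rec (k : ℕ) (m : ℝ) :
    Qp (k + 1) (m + 1) + Qp (k + 1) (m - 1) - 2 * Qp (k + 1) m =
      2 * (k + 1) * (2 * (k + 1) - 1) * Qp k m := by
  match k with
  | 0 => simp [Qp]; ring
  | j + 1 =>
    -- abbreviations
    have e1 : Qp (j + 2) (m + 1) = U (j + 2) (m - j) * U (j + 2) (m + 1) := by
      rw [Qp_eq]
      congr 2
      push_cast; ring
    have e2 : Qp (j + 2) (m - 1) = U (j + 2) (m - j - 2) * U (j + 2) (m - 1) := by
      rw [Qp_eq]
      congr 2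
      push_cast; ring
    have e3 : Qp (j + 2) m = U (j + 2) (m - j - 1) * U (j + 2) m := by
      rw [Qp_eq]
      congr 2
      push_cast; ring
    have e4 : Qp (j + 1) m = U (j + 1) (m - j) * U (j + 1) m := by
      rw [Qp_eq]
      congr 2
      push_cast; ring
    -- splits
    have s1 : U (j + 2) (m - j) = U (j + 1) (m - j) * (m + 1) := by
      rw [U_succ]; push_cast; ring_nf
    have s2 : U (j + 2) (m + 1) = U j (m + 1) * (m + j + 1) * (m + j + 2) := by
      rw [U_succ, U_succ]; push_cast; ring
    have s3 : U (j + 2) (m - j - 2) = (m - j - 2) * (m - j - 1) * U j (m - j) := by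
      have : (j + 2) = 2 + j := by omega
      rw [this, U_add]
      have : U 2 (m - j - 2) = (m - j - 2) * (m - j - 1) := by
        rw [show (2:ℕ) = 1 + 1 from rfl, U_add, U_one, U_one]; ring
      rw [this]
      have : m - j - 2 + (2:ℕ) = m - j := by push_cast; ring
      rw [this]
    have s4 : U (j + 2) (m - 1) = (m - 1) * (m * U j (m + 1)) := by
      have : (j + 2) = 1 + (1 + j) := by omega
      rw [this, U_add, U_add, U_one, U_one]
      have h1 : m - 1 + (1:ℕ) = m := by push_cast; ring
      have h2 : m + (1:ℕ) = m + 1 := by push_cast; ring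
      rw [h1, h2]
    have s5 : U (j + 2) (m - j - 1) = (m - j - 1) * U (j + 1) (m - j) := by
      have : (j + 2) = 1 + (j + 1) := by omega
      rw [this, U_add, U_one]
      have : m - j - 1 + (1:ℕ) = m - j := by push_cast; ring
      rw [this]
    have s6 : U (j + 2) m = m * (U j (m + 1) * (m + j + 1)) := by
      have : (j + 2) = 1 + (j + 1) := by omega
      rw [this, U_add, U_one, U_succ]
      have : m + (1:ℕ) = m + 1 := by push_cast; ring
      rw [this]
      ring
    have s7 : U (j + 1) (m - j) = U j (m - j) * m := by
      rw [U_succ]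
      have : m - j + (j:ℝ) = m := by ring
      rw [this]
    have s8 : U (j + 1) m = m * U j (m + 1) := by
      have : (j + 1) = 1 + j := by omega
      rw [this, U_add, U_one]
      have : m + (1:ℕ) = m + 1 := by push_cast; ring
      rw [this]
    rw [e1, e2, e3, e4, s1, s2, s3, s4, s5, s6, s8]
    rw [s7]
    push_cast
    ring

lemma Qp_zero_nat (n k : ℕ) (h : n < k) : Qp k (n : ℝ) = 0 := by
  apply Finset.prod_eq_zero (Finset.mem_range.2 h)
  ring

lemma dd_zero_coeff (m : ℝ) : dd m 0 = 1 := by simp [dd, Qp]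

lemma dd_zero_of_gt (n k : ℕ) (h : n < k) : dd (n : ℝ) k = 0 := by
  rw [dd, Qp_zero_nat n k h, mul_zero]

lemma dd_rec (m : ℝ) (k : ℕ) :
    dd (m + 1) (k + 1) + dd (m - 1) (k + 1) - 2 * dd m (k + 1) = -4 * dd m k := by
  have hf : (Nat.factorial (2 * (k + 1)) : ℝ) =
      (2 * k + 2) * (2 * k + 1) * Nat.factorial (2 * k) := by
    have : 2 * (k + 1) = (2 * k + 1) + 1 := by omega
    rw [this, Nat.factorial_succ, Nat.factorial_succ]
    push_cast
    ring
  have hne : (Nat.factorial (2 * k) : ℝ) ≠ 0 := by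
    exact_mod_cast Nat.factorial_ne_zero (2 * k)
  have h1 : (2 * (k : ℝ) + 2) ≠ 0 := by positivity
  have h2 : (2 * (k : ℝ) + 1) ≠ 0 := by positivity
  rw [dd, dd, dd, dd, hf]
  have hq := Qp_rec k m
  field_simp
  linear_combination ((-4 : ℝ) ^ (k + 1)) * hq

lemma poch_half (k : ℕ) : poch (1 / 2) k = Nat.factorial (2 * k) / (4 ^ k * Nat.factorial k) := by
  induction k with
  | zero => simp [poch]
  | succ k ih =>
    rw [poch, ascPochhammer_succ_eval, ← poch, ih]
    have hf : (Nat.factorial (2 * (k + 1)) : ℝ) =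
        (2 * k + 2) * (2 * k + 1) * Nat.factorial (2 * k) := by
      have : 2 * (k + 1) = (2 * k + 1) + 1 := by omega
      rw [this, Nat.factorial_succ, Nat.factorial_succ]
      push_cast
      ring
    rw [hf, Nat.factorial_succ]
    have hne : (Nat.factorial (2 * k) : ℝ) ≠ 0 := by
      exact_mod_cast Nat.factorial_ne_zero (2 * k)
    have hne2 : (Nat.factorial k : ℝ) ≠ 0 := by
      exact_mod_cast Nat.factorial_ne_zero k
    have h4 : ((4 : ℝ)) ^ k ≠ 0 := by positivity
    push_cast
    field_simp
    ring

lemma poch_half_pos (k : ℕ) : 0 < poch (1 / 2) k := by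
  rw [poch_prod]
  apply Finset.prod_pos
  intro i _
  positivity

lemma poch_neg_mul (n k : ℕ) :
    poch (-(n : ℝ)) k * poch (n : ℝ) k = (-1) ^ k * Qp k n := by
  rw [poch_prod, poch_prod, ← Finset.prod_mul_distrib]
  have h : ∀ i ∈ range k, (-(n : ℝ) + i) * ((n : ℝ) + i) = (-1) * ((n : ℝ) ^ 2 - (i : ℝ) ^ 2) :=
    fun i _ => by ring
  rw [Finset.prod_congr rfl h, Finset.prod_mul_distrib, Finset.prod_const, Finset.card_range, Qp]

lemma term_eq (n k : ℕ) (y : ℝ) :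
    poch (-(n : ℝ)) k * poch (n : ℝ) k / poch (1 / 2) k * y ^ k / (Nat.factorial k) =
      dd (n : ℝ) k * y ^ k := by
  rw [poch_neg_mul, poch_half, dd]
  have hne : (Nat.factorial (2 * k) : ℝ) ≠ 0 := by
    exact_mod_cast Nat.factorial_ne_zero (2 * k)
  have hne2 : (Nat.factorial k : ℝ) ≠ 0 := by
    exact_mod_cast Nat.factorial_ne_zero k
  have h4 : ((4 : ℝ)) ^ k ≠ 0 := by positivity
  field_simp
  rw [show ((-4 : ℝ)) ^ k = (-1) ^ k * 4 ^ k by rw [← mul_pow]; norm_num]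
  ring

lemma F21_finite (n : ℕ) (y : ℝ) :
    F21 (-(n : ℝ)) (n : ℝ) (1 / 2) y = ∑ k ∈ range (n + 1), dd (n : ℝ) k * y ^ k := by
  rw [F21]
  have h : ∀ k : ℕ,
      poch (-(n : ℝ)) k * poch (n : ℝ) k / poch (1 / 2) k * y ^ k / (Nat.factorial k) =
        dd (n : ℝ) k * y ^ k := fun k => term_eq n k y
  rw [tsum_congr h]
  apply tsum_eq_sum
  intro k hk
  have hnk : n < k := by
    by_contra hc
    exact hk (Finset.mem_range.2 (by omega))
  rw [dd_zero_of_gt n k hnk, zero_mul]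

lemma sum_ext (n N : ℕ) (h : n + 1 ≤ N) (y : ℝ) :
    ∑ k ∈ range (n + 1), dd (n : ℝ) k * y ^ k = ∑ k ∈ range N, dd (n : ℝ) k * y ^ k := by
  apply Finset.sum_subset (Finset.range_subset_range.2 h)
  intro k hk hk'
  rw [dd_zero_of_gt n k (by simp at hk hk' ⊢; omega), zero_mul]

lemma cheb_eq_sum (n : ℕ) (x : ℝ) :
    cheb n x = ∑ k ∈ range (n + 1), dd (n : ℝ) k * ((1 - x) / 2) ^ k := by
  induction n using Nat.twoStepInduction with
  | zero => simp [cheb, dd, Qp]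
  | one =>
    show x = _
    rw [Finset.sum_range_succ, Finset.sum_range_one]
    norm_num [dd, Qp, Finset.prod_range_one, Nat.factorial]
    ring
  | more n ih1 ih2 =>
    set y : ℝ := (1 - x) / 2 with hy
    have hx : x = 1 - 2 * y := by rw [hy]; ring
    show 2 * x * cheb (n + 1) x - cheb n x = _
    rw [ih1, ih2,
      sum_ext n (n + 3) (by omega) y, sum_ext (n + 1) (n + 3) (by omega) y,
      sum_ext (n + 2) (n + 3) (by omega) y]
    push_cast
    have E1 : (∑ k ∈ range (n + 3),
          (dd ((n : ℝ) + 2) k + dd (n : ℝ) k - 2 * dd ((n : ℝ) + 1) k) * y ^ k)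
        + ∑ k ∈ range (n + 3), 4 * dd ((n : ℝ) + 1) k * y ^ (k + 1) = 0 := by
      rw [show n + 3 = (n + 2) + 1 from rfl,
        Finset.sum_range_succ' (fun k =>
          (dd ((n : ℝ) + 2) k + dd (n : ℝ) k - 2 * dd ((n : ℝ) + 1) k) * y ^ k) (n + 2),
        Finset.sum_range_succ (fun k => 4 * dd ((n : ℝ) + 1) k * y ^ (k + 1)) (n + 2)]
      have hz : dd ((n : ℝ) + 1) (n + 2) = 0 := by
        rw [show ((n : ℝ) + 1) = ((n + 1 : ℕ) : ℝ) by push_cast; ring]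
        exact dd_zero_of_gt (n + 1) (n + 2) (by omega)
      have h0 : dd ((n : ℝ) + 2) 0 + dd (n : ℝ) 0 - 2 * dd ((n : ℝ) + 1) 0 = 0 := by
        rw [dd_zero_coeff, dd_zero_coeff, dd_zero_coeff]; ring
      have hterm : ∀ k ∈ range (n + 2),
          (dd ((n : ℝ) + 2) (k + 1) + dd (n : ℝ) (k + 1) - 2 * dd ((n : ℝ) + 1) (k + 1))
            * y ^ (k + 1) + 4 * dd ((n : ℝ) + 1) k * y ^ (k + 1) = 0 := by
        intro k _
        have hr := dd_rec ((n : ℝ) + 1) k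
        rw [show (n : ℝ) + 1 + 1 = (n : ℝ) + 2 by ring,
          show (n : ℝ) + 1 - 1 = (n : ℝ) by ring] at hr
        linear_combination y ^ (k + 1) * hr
      simp only [hz, h0, zero_mul, mul_zero, add_zero]
      rw [← Finset.sum_add_distrib]
      exact Finset.sum_eq_zero hterm
    have E2 : ∑ k ∈ range (n + 3),
          (dd ((n : ℝ) + 2) k * y ^ k + dd (n : ℝ) k * y ^ k
            - 2 * x * (dd ((n : ℝ) + 1) k * y ^ k))
        = (∑ k ∈ range (n + 3),
            (dd ((n : ℝ) + 2) k + dd (n : ℝ) k - 2 * dd ((n : ℝ) + 1) k) * y ^ k)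
          + ∑ k ∈ range (n + 3), 4 * dd ((n : ℝ) + 1) k * y ^ (k + 1) := by
      rw [← Finset.sum_add_distrib]
      refine Finset.sum_congr rfl fun k _ => ?_
      rw [hx]
      ring
    have E3 : ∑ k ∈ range (n + 3),
          (dd ((n : ℝ) + 2) k * y ^ k + dd (n : ℝ) k * y ^ k
            - 2 * x * (dd ((n : ℝ) + 1) k * y ^ k))
        = (∑ k ∈ range (n + 3), dd ((n : ℝ) + 2) k * y ^ k)
          + (∑ k ∈ range (n + 3), dd (n : ℝ) k * y ^ k)
          - 2 * x * (∑ k ∈ range (n + 3), dd ((n : ℝ) + 1) k * y ^ k) := by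
      rw [Finset.sum_sub_distrib, Finset.sum_add_distrib, ← Finset.mul_sum]
    linear_combination E3 - E1 - E2

lemma F21_at_zero (a b c : ℝ) : F21 a b c 0 = 1 := by
  rw [F21]
  rw [tsum_eq_single 0 (by
    intro k hk
    rw [zero_pow hk, mul_zero, zero_div])]
  simp [poch]

theorem chebyshev_eq_normalized_jacobi (n : ℕ) (x : ℝ) :
    cheb n x = jacobi (-1/2) (-1/2) n x / jacobi (-1/2) (-1/2) n 1 ∧
    jacobi (-1/2) (-1/2) n 1 = poch (1/2) n / (Nat.factorial n) := by
  have harg : (-1/2 : ℝ) + 1 = 1 / 2 := by norm_num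
  have hb : (n : ℝ) + 1 + (-1/2) + (-1/2) = (n : ℝ) := by ring
  have h1 : jacobi (-1/2) (-1/2) n 1 = poch (1/2) n / (Nat.factorial n) := by
    rw [jacobi, harg, hb]
    norm_num [F21_at_zero]
  refine ⟨?_, h1⟩
  have hP : poch (1/2) n / (Nat.factorial n) ≠ 0 := by
    apply div_ne_zero (ne_of_gt (by exact_mod_cast poch_half_pos n))
    exact_mod_cast Nat.factorial_ne_zero n
  have h2 : jacobi (-1/2) (-1/2) n x = poch (1/2) n / (Nat.factorial n) *
      F21 (-(n : ℝ)) (n : ℝ) (1/2) ((1 - x) / 2) := by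
    rw [jacobi, harg, hb, show (1 : ℝ) + -1/2 = 1/2 from by norm_num]
  rw [h2, h1, mul_comm (poch (1/2) n / (Nat.factorial n : ℝ)), mul_div_assoc, div_self hP,
    mul_one, F21_finite]
  exact cheb_eq_sum n x
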